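/- Let d ≥ 1 and let K be a nonempty closed convex subset of ℝ^d with closedBall(0,1) ⊆ K ⊆ closedBall(0,R) for some R > 1. Then ∫_{ℝ^d} exp(−(d²/2)·infDist(y,K)²) dy ≤ (√(2πe) + 1) · vol(K). -/

import Mathlib

open MeasureTheory Metric Set Filter Real ENNReal

lemma aux_tendsto_negexp {f : ℝ → ℝ} (hf : Tendsto f atTop atTop) :
    Tendsto (fun s => -Real.exp (-f s)) atTop (nhds 0) := by
  have h1 : Tendsto (fun s => -f s) atTop atBot := tendsto_neg_atBot_iff.mpr hf
  have h2 := Real.tendsto_exp_atBot.comp h1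
  simpa using h2.neg


lemma aux_gauss_deriv (c x : ℝ) :
    HasDerivAt (fun u : ℝ => -Real.exp (-c * u ^ 2))
      (2 * c * x * Real.exp (-c * x ^ 2)) x := by
  have h1 : HasDerivAt (fun u : ℝ => -c * u ^ 2) (-c * (2 * x)) x := by
    simpa using (hasDerivAt_pow 2 x).const_mul (-c)
  have h2 : HasDerivAt (fun u : ℝ => -Real.exp (-c * u ^ 2))
      (-(Real.exp (-c * x ^ 2) * (-c * (2 * x)))) x := (h1.exp).neg
  convert h2 using 1
  ring

lemma aux_gauss_tail {c : ℝ} (hc : 0 < c) {r : ℝ} (hr : 0 ≤ r) :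
    IntegrableOn (fun s => 2 * c * s * Real.exp (-c * s ^ 2)) (Ioi r) ∧
    ∫ s in Ioi r, 2 * c * s * Real.exp (-c * s ^ 2) = Real.exp (-c * r ^ 2) := by
  have hderiv : ∀ x ∈ Ici r, HasDerivAt (fun u : ℝ => -Real.exp (-c * u ^ 2))
      (2 * c * x * Real.exp (-c * x ^ 2)) x := fun x _ => aux_gauss_deriv c x
  have hpos : ∀ x ∈ Ioi r, 0 ≤ 2 * c * x * Real.exp (-c * x ^ 2) := by
    intro x hx
    have hx0 : 0 ≤ x := le_trans hr (le_of_lt hx)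
    positivity
  have htend : Tendsto (fun u : ℝ => -Real.exp (-c * u ^ 2)) atTop (nhds 0) := by
    have : Tendsto (fun u : ℝ => c * u ^ 2) atTop atTop := by
      exact (tendsto_pow_atTop (by norm_num : 2 ≠ 0)).const_mul_atTop hc
    have := aux_tendsto_negexp this
    refine this.congr (fun u => by ring_nf)
  refine ⟨integrableOn_Ioi_deriv_of_nonneg' hderiv hpos htend, ?_⟩
  rw [integral_Ioi_of_hasDerivAt_of_nonneg' hderiv hpos htend]
  simp

-- derivative of -exp(-(1/2)*(n*x-1)^2)
lemma aux_deriv2 (n x : ℝ) :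
    HasDerivAt (fun u : ℝ => -Real.exp (-(1/2) * (n * u - 1) ^ 2))
      (n * (n * x - 1) * Real.exp (-(1/2) * (n * x - 1) ^ 2)) x := by
  have h0 : HasDerivAt (fun u : ℝ => n * u - 1) n x := by
    simpa using ((hasDerivAt_id x).const_mul n).sub_const 1
  have h1 : HasDerivAt (fun u : ℝ => -(1/2) * (n * u - 1) ^ 2)
      (-(1/2) * (2 * (n * x - 1) ^ 1 * n)) x := (h0.pow 2).const_mul (-(1/2))
  have h2 : HasDerivAt (fun u : ℝ => -Real.exp (-(1/2) * (n * u - 1) ^ 2))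
      (-(Real.exp (-(1/2) * (n * x - 1) ^ 2) * (-(1/2) * (2 * (n * x - 1) ^ 1 * n)))) x :=
    (h1.exp).neg
  convert h2 using 1
  ring

lemma aux_tendsto2 {n : ℝ} (hn : 1 ≤ n) :
    Tendsto (fun u : ℝ => -Real.exp (-(1/2) * (n * u - 1) ^ 2)) atTop (nhds 0) := by
  have h1 : Tendsto (fun u : ℝ => n * u - 1) atTop atTop := by
    have := tendsto_atTop_add_const_right atTop (-1 : ℝ)
      (tendsto_id.const_mul_atTop (show (0:ℝ) < n by linarith))
    simpa [sub_eq_add_neg] using this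
  have h : Tendsto (fun u : ℝ => (1/2) * (n * u - 1) ^ 2) atTop atTop :=
    ((tendsto_pow_atTop (by norm_num : 2 ≠ 0)).comp h1).const_mul_atTop (by norm_num)
  simpa [neg_mul] using aux_tendsto_negexp h

lemma aux_intA {n : ℝ} (hn : 1 ≤ n) :
    IntegrableOn (fun s => n * (n * s - 1) * Real.exp (-(1/2) * (n * s - 1) ^ 2)) (Ioi 0) := by
  have hn0 : 0 < n := by linarith
  have hsplit : Ioc (0:ℝ) (1/n) ∪ Ioi (1/n) = Ioi 0 :=
    Ioc_union_Ioi_eq_Ioi (by positivity)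
  rw [← hsplit]
  apply IntegrableOn.union
  · exact Continuous.integrableOn_Ioc (by fun_prop)
  · apply integrableOn_Ioi_deriv_of_nonneg' (fun x _ => aux_deriv2 n x) ?_ (aux_tendsto2 hn)
    intro x hx
    have : 0 ≤ n * x - 1 := by
      rw [mem_Ioi] at hx
      have := (div_lt_iff₀ hn0).mp hx
      linarith [mul_comm x n]
    positivity

lemma aux_valA {n : ℝ} (hn : 1 ≤ n) :
    ∫ s in Ioi 0, n * (n * s - 1) * Real.exp (-(1/2) * (n * s - 1) ^ 2)
      = Real.exp (-(1/2)) := by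
  rw [integral_Ioi_of_hasDerivAt_of_tendsto' (fun x _ => aux_deriv2 n x) (aux_intA hn)
    (aux_tendsto2 hn)]
  norm_num

lemma aux_intB {n : ℝ} (hn : 1 ≤ n) :
    Integrable (fun s : ℝ => n * Real.exp (-(1/2) * (n * s - 1) ^ 2)) := by
  have h0 : Integrable (fun x : ℝ => Real.exp (-(1/2) * x ^ 2)) :=
    integrable_exp_neg_mul_sq (by norm_num)
  have h1 := h0.comp_sub_right 1
  have h2 := h1.comp_mul_left' (show n ≠ 0 by linarith)
  exact h2.const_mul n

lemma aux_valB {n : ℝ} (hn : 1 ≤ n) :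
    ∫ s : ℝ, n * Real.exp (-(1/2) * (n * s - 1) ^ 2) = Real.sqrt (2 * Real.pi) := by
  have hn0 : (0:ℝ) < n := by linarith
  rw [MeasureTheory.integral_const_mul]
  have h1 : (∫ s : ℝ, Real.exp (-(1/2) * (n * s - 1) ^ 2))
      = |n⁻¹| • ∫ v : ℝ, Real.exp (-(1/2) * (v - 1) ^ 2) :=
    MeasureTheory.Measure.integral_comp_mul_left (fun v => Real.exp (-(1/2) * (v - 1) ^ 2)) n
  rw [h1]
  have h2 : (∫ v : ℝ, Real.exp (-(1/2) * (v - 1) ^ 2))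
      = ∫ v : ℝ, Real.exp (-(1/2) * v ^ 2) :=
    integral_sub_right_eq_self (fun v => Real.exp (-(1/2) * v ^ 2)) 1
  rw [h2, integral_gaussian]
  rw [abs_of_pos (inv_pos.mpr hn0), smul_eq_mul]
  rw [show Real.pi / (1/2) = 2 * Real.pi by ring]
  field_simp
lemma aux_oneDim {n : ℝ} (hn : 1 ≤ n) :
    IntegrableOn (fun s => n ^ 2 * s * Real.exp (-(1/2) * (n * s - 1) ^ 2)) (Ioi 0) ∧
    ∫ s in Ioi 0, n ^ 2 * s * Real.exp (-(1/2) * (n * s - 1) ^ 2)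
      ≤ Real.exp (-(1/2)) + Real.sqrt (2 * Real.pi) := by
  have hfun : (fun s => n ^ 2 * s * Real.exp (-(1/2) * (n * s - 1) ^ 2))
      = fun s => n * (n * s - 1) * Real.exp (-(1/2) * (n * s - 1) ^ 2)
        + n * Real.exp (-(1/2) * (n * s - 1) ^ 2) := by
    funext s; ring
  have hint : IntegrableOn (fun s => n ^ 2 * s * Real.exp (-(1/2) * (n * s - 1) ^ 2)) (Ioi 0) := by
    rw [hfun]
    exact (aux_intA hn).add ((aux_intB hn).integrableOn)
  refine ⟨hint, ?_⟩
  rw [hfun, integral_add (aux_intA hn) ((aux_intB hn).integrableOn), aux_valA hn]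
  have hB : ∫ s in Ioi 0, n * Real.exp (-(1/2) * (n * s - 1) ^ 2) ≤ Real.sqrt (2 * Real.pi) := by
    rw [← aux_valB hn]
    apply setIntegral_le_integral (aux_intB hn)
    filter_upwards with s
    positivity
  linarith
open Pointwise in

lemma aux_vol {d : ℕ} (K : Set (EuclideanSpace ℝ (Fin d))) (hKne : K.Nonempty)
    (hKconv : Convex ℝ K) (hK1 : closedBall (0 : EuclideanSpace ℝ (Fin d)) 1 ⊆ K)
    {s : ℝ} (hs : 0 < s) :
    volume {y : EuclideanSpace ℝ (Fin d) | infDist y K < s}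
      ≤ ENNReal.ofReal ((1 + s) ^ d) * volume K := by
  have hsub : {y : EuclideanSpace ℝ (Fin d) | infDist y K < s} ⊆ (1 + s) • K := by
    intro y hy
    obtain ⟨x, hxK, hxy⟩ := (infDist_lt_iff hKne).mp hy
    have hvK : y - x ∈ s • K := by
      refine ⟨s⁻¹ • (y - x), hK1 ?_, by simp [smul_smul, mul_inv_cancel₀ hs.ne']⟩
      rw [mem_closedBall_zero_iff, norm_smul, norm_inv, Real.norm_of_nonneg hs.le]
      rw [dist_eq_norm] at hxy
      rw [inv_mul_le_iff₀ hs]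
      nlinarith
    have : y = x + (y - x) := by abel
    rw [this, hKconv.add_smul zero_le_one hs.le, one_smul]
    exact Set.add_mem_add hxK hvK
  calc volume {y : EuclideanSpace ℝ (Fin d) | infDist y K < s}
      ≤ volume ((1 + s) • K) := measure_mono hsub
    _ = ENNReal.ofReal ((1 + s) ^ d) * volume K := by
        rw [Measure.addHaar_smul, finrank_euclideanSpace_fin,
          abs_of_nonneg (by positivity)]

theorem stmt_5 (d : ℕ) (hd : 1 ≤ d) (R : ℝ) (hR : 1 < R)
    (K : Set (EuclideanSpace ℝ (Fin d))) (hKne : K.Nonempty) (hKcl : IsClosed K)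
    (hKconv : Convex ℝ K) (hK1 : closedBall (0 : EuclideanSpace ℝ (Fin d)) 1 ⊆ K)
    (hKR : K ⊆ closedBall (0 : EuclideanSpace ℝ (Fin d)) R) :
    ∫ y, Real.exp (-((d : ℝ) ^ 2 / 2) * (infDist y K) ^ 2) ≤
      (Real.sqrt (2 * Real.pi * Real.exp 1) + 1) * (volume K).toReal := by
  have hd1 : (1:ℝ) ≤ (d:ℝ) := by exact_mod_cast hd
  set n : ℝ := (d:ℝ) with hn
  have hn0 : (0:ℝ) < n := by linarith
  have hc : (0:ℝ) < n ^ 2 / 2 := by positivity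
  have hKvol : volume K ≠ ⊤ :=
    ((measure_mono hKR).trans_lt (measure_closedBall_lt_top)).ne
  set C : ℝ := Real.sqrt (2 * Real.pi * Real.exp 1) + 1 with hC
  have hC0 : (0:ℝ) ≤ C := by positivity
  have hsqrt : Real.exp (1/2 : ℝ) * (Real.exp (-(1/2) : ℝ) + Real.sqrt (2 * Real.pi)) = C := by
    have h1 : Real.exp (1/2:ℝ) * Real.exp (-(1/2):ℝ) = 1 := by
      rw [← Real.exp_add]; norm_num
    have h2 : Real.sqrt (Real.exp 1) = Real.exp (1/2 : ℝ) := by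
      have hee : Real.exp (1/2:ℝ) * Real.exp (1/2:ℝ) = Real.exp 1 := by
        rw [← Real.exp_add]; norm_num
      calc Real.sqrt (Real.exp 1) = Real.sqrt (Real.exp (1/2:ℝ) * Real.exp (1/2:ℝ)) := by
            rw [hee]
        _ = Real.exp (1/2:ℝ) := Real.sqrt_mul_self (Real.exp_pos _).le
    have h3 : Real.sqrt (2 * Real.pi * Real.exp 1)
        = Real.sqrt (2 * Real.pi) * Real.sqrt (Real.exp 1) :=
      Real.sqrt_mul (by positivity) _
    rw [hC, mul_add, h1, h3, h2]
    ring
  have hfnn : ∀ y : EuclideanSpace ℝ (Fin d),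
      0 ≤ Real.exp (-(n ^ 2 / 2) * infDist y K ^ 2) := fun y => (Real.exp_pos _).le
  have hfm : AEStronglyMeasurable
      (fun y : EuclideanSpace ℝ (Fin d) => Real.exp (-(n ^ 2 / 2) * infDist y K ^ 2)) volume := by
    apply Continuous.aestronglyMeasurable
    exact (continuous_const.mul ((continuous_infDist_pt K).pow 2)).rexp
  have key : ∫⁻ y, ENNReal.ofReal (Real.exp (-(n ^ 2 / 2) * infDist y K ^ 2))
      ≤ ENNReal.ofReal C * volume K := by
    set g : ℝ → ℝ := fun s => 2 * (n ^ 2 / 2) * s * Real.exp (-(n ^ 2 / 2) * s ^ 2) with hg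
    have hgm : Measurable g := by fun_prop
    set G : EuclideanSpace ℝ (Fin d) → ℝ → ℝ≥0∞ :=
      fun y s => (Ioi (infDist y K)).indicator (fun t => ENNReal.ofReal (g t)) s with hG
    have step1 : ∀ y : EuclideanSpace ℝ (Fin d),
        ENNReal.ofReal (Real.exp (-(n ^ 2 / 2) * infDist y K ^ 2))
          = ∫⁻ s in Ioi (0:ℝ), G y s := by
      intro y
      have hr : (0:ℝ) ≤ infDist y K := infDist_nonneg
      obtain ⟨hint, hval⟩ := aux_gauss_tail hc hr
      have hnn : 0 ≤ᵐ[volume.restrict (Ioi (infDist y K))] g := by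
        filter_upwards [ae_restrict_mem measurableSet_Ioi] with s hs
        have hs0 : (0:ℝ) ≤ s := hr.trans (le_of_lt hs)
        simp only [hg]
        positivity
      calc ENNReal.ofReal (Real.exp (-(n ^ 2 / 2) * infDist y K ^ 2))
          = ENNReal.ofReal (∫ s in Ioi (infDist y K), g s) := by
            simp only [hg]; rw [hval]
        _ = ∫⁻ s in Ioi (infDist y K), ENNReal.ofReal (g s) :=
            ofReal_integral_eq_lintegral_ofReal hint hnn
        _ = ∫⁻ s in Ioi (0:ℝ), G y s := by
            simp only [hG]
            rw [lintegral_indicator measurableSet_Ioi,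
              Measure.restrict_restrict measurableSet_Ioi,
              inter_eq_left.mpr (Ioi_subset_Ioi hr)]
    have hGm : Measurable (Function.uncurry G) := by
      have hSopen : MeasurableSet {p : EuclideanSpace ℝ (Fin d) × ℝ | infDist p.1 K < p.2} :=
        (isOpen_lt ((continuous_infDist_pt K).comp continuous_fst) continuous_snd).measurableSet
      have heq : Function.uncurry G
          = Set.indicator {p : EuclideanSpace ℝ (Fin d) × ℝ | infDist p.1 K < p.2}
              (fun p => ENNReal.ofReal (g p.2)) := by
        funext p
        rcases p with ⟨y, s⟩
        by_cases h : infDist y K < s <;>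
          simp [Function.uncurry, hG, Set.indicator_apply, h]
      rw [heq]
      exact Measurable.indicator
        ((ENNReal.measurable_ofReal.comp hgm).comp measurable_snd) hSopen
    have hswap : ∫⁻ y, ∫⁻ s in Ioi (0:ℝ), G y s
        = ∫⁻ s in Ioi (0:ℝ), ∫⁻ y, G y s :=
      lintegral_lintegral_swap hGm.aemeasurable
    have step3 : ∀ s : ℝ, s ∈ Ioi (0:ℝ) → (∫⁻ y, G y s)
        ≤ ENNReal.ofReal (g s) * (ENNReal.ofReal ((1 + s) ^ d) * volume K) := by
      intro s hs
      have hopen : MeasurableSet {y : EuclideanSpace ℝ (Fin d) | infDist y K < s} :=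
        (isOpen_lt (continuous_infDist_pt K) continuous_const).measurableSet
      have h1 : (fun y => G y s)
          = Set.indicator {y : EuclideanSpace ℝ (Fin d) | infDist y K < s}
              (fun _ => ENNReal.ofReal (g s)) := by
        funext y
        by_cases h : infDist y K < s <;> simp [hG, Set.indicator_apply, h]
      rw [h1, lintegral_indicator_const hopen]
      exact mul_le_mul_right (aux_vol K hKne hKconv hK1 hs) _
    have hmeas2 : Measurable fun s : ℝ => ENNReal.ofReal (g s) * ENNReal.ofReal ((1 + s) ^ d) :=
      (ENNReal.measurable_ofReal.comp hgm).mul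
        (ENNReal.measurable_ofReal.comp (by fun_prop : Measurable fun s : ℝ => (1 + s) ^ d))
    obtain ⟨hintH, hvalH⟩ := aux_oneDim (show (1:ℝ) ≤ n from hd1)
    calc ∫⁻ y, ENNReal.ofReal (Real.exp (-(n ^ 2 / 2) * infDist y K ^ 2))
        = ∫⁻ y, ∫⁻ s in Ioi (0:ℝ), G y s := by simp_rw [step1]
      _ = ∫⁻ s in Ioi (0:ℝ), ∫⁻ y, G y s := hswap
      _ ≤ ∫⁻ s in Ioi (0:ℝ),
            ENNReal.ofReal (g s) * (ENNReal.ofReal ((1 + s) ^ d) * volume K) := by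
          refine lintegral_mono_ae ?_
          filter_upwards [ae_restrict_mem measurableSet_Ioi] with s hs using step3 s hs
      _ = (∫⁻ s in Ioi (0:ℝ), ENNReal.ofReal (g s) * ENNReal.ofReal ((1 + s) ^ d))
            * volume K := by
          simp_rw [← mul_assoc]
          rw [lintegral_mul_const _ hmeas2]
      _ ≤ (∫⁻ s in Ioi (0:ℝ), ENNReal.ofReal
              (Real.exp (1/2) * (n ^ 2 * s * Real.exp (-(1/2) * (n * s - 1) ^ 2))))
            * volume K := by
          apply mul_le_mul_left
          refine lintegral_mono_ae ?_
          filter_upwards [ae_restrict_mem measurableSet_Ioi] with s hs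
          have hs0 : (0:ℝ) < s := hs
          have hgnn : (0:ℝ) ≤ g s := by simp only [hg]; positivity
          rw [← ENNReal.ofReal_mul hgnn]
          apply ENNReal.ofReal_le_ofReal
          have h1 : (1 + s) ^ d ≤ Real.exp s ^ d :=
            pow_le_pow_left₀ (by linarith) (by linarith [Real.add_one_le_exp s]) d
          have h2 : Real.exp s ^ d = Real.exp (n * s) := by
            rw [← Real.exp_nat_mul, hn]
          have h3 : Real.exp (-(n ^ 2 / 2) * s ^ 2) * Real.exp (n * s)
              = Real.exp (1/2) * Real.exp (-(1/2) * (n * s - 1) ^ 2) := by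
            rw [← Real.exp_add, ← Real.exp_add]
            congr 1
            ring
          calc g s * (1 + s) ^ d ≤ g s * Real.exp s ^ d :=
                mul_le_mul_of_nonneg_left h1 hgnn
            _ = Real.exp (1/2) * (n ^ 2 * s * Real.exp (-(1/2) * (n * s - 1) ^ 2)) := by
                rw [h2]
                simp only [hg]
                rw [mul_assoc, h3]
                ring
      _ ≤ ENNReal.ofReal (Real.exp (1/2)
            * (Real.exp (-(1/2)) + Real.sqrt (2 * Real.pi))) * volume K := by
          apply mul_le_mul_left
          rw [← ofReal_integral_eq_lintegral_ofReal (hintH.const_mul _) ?_]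
          · apply ENNReal.ofReal_le_ofReal
            rw [MeasureTheory.integral_const_mul]
            exact mul_le_mul_of_nonneg_left hvalH (Real.exp_pos _).le
          · filter_upwards [ae_restrict_mem measurableSet_Ioi] with s hs
            have hs0 : (0:ℝ) < s := hs
            exact mul_nonneg (Real.exp_pos _).le
              (mul_nonneg (mul_nonneg (sq_nonneg n) hs0.le) (Real.exp_pos _).le)
      _ = ENNReal.ofReal C * volume K := by rw [hsqrt]
  rw [integral_eq_lintegral_of_nonneg_ae (Filter.Eventually.of_forall hfnn) hfm]
  have h2 := ENNReal.toReal_mono (ENNReal.mul_ne_top ENNReal.ofReal_ne_top hKvol) key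
  rwa [ENNReal.toReal_mul, ENNReal.toReal_ofReal hC0] at h2
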